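/- For n ≥ 2 let P_n be the polytope {x ∈ ℝ^{n²}_{≥0} : Σ_{e∈P} x(e) = 1 for all perfect matchings P of K_{n,n}}, with vertices m_{v₁},…,m_{v_n}, m_{w₁},…,m_{w_n} (indicator vectors of vertex stars). Then the toric ideal I(P_n) is not generated by its elements of degree at most n−1. In particular, s = m_{v₁}+⋯+m_{v_n} = m_{w₁}+⋯+m_{w_n} yields a degree-n binomial relation t_{v₁}⋯t_{v_n} − t_{w₁}⋯t_{w_n} not in the ideal generated by lower-degree elements, because m_{v_i} + m_{w_j} does not divide s in S(P_n) for any i, j. -/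

import Mathlib

open BigOperators Pointwise

/-- The polytope `P_n ⊆ ℝ^{n²}`. -/
def matchingPolytope (n : ℕ) : Set (Fin n × Fin n → ℝ) :=
  {x | (∀ e, 0 ≤ x e) ∧ ∀ σ : Equiv.Perm (Fin n), ∑ i, x (i, σ i) = 1}

/-- The indicator vector of the star of a vertex of `K_{n,n}`. -/
def vertexStar (n : ℕ) : Fin n ⊕ Fin n → Fin n × Fin n → ℤ
  | .inl i => fun e => if e.1 = i then 1 else 0
  | .inr j => fun e => if e.2 = j then 1 else 0

/-- The toric ideal associated to a family of lattice points `m : ι → M`. -/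
noncomputable def toricIdeal {ι M : Type} [AddCommMonoid M] (m : ι → M) :
    Ideal (MvPolynomial ι ℂ) :=
  RingHom.ker (MvPolynomial.aeval
    (fun i => (AddMonoidAlgebra.single ((m i, 1) : M × ℤ) (1 : ℂ) :
      AddMonoidAlgebra ℂ (M × ℤ)))).toRingHom

namespace MP18

variable (n : ℕ)

/-- exponent vector of `∏ X (inl i)` -/
noncomputable def oneV : (Fin n ⊕ Fin n) →₀ ℕ := ∑ i : Fin n, Finsupp.single (Sum.inl i) 1
/-- exponent vector of `∏ X (inr j)` -/
noncomputable def oneW : (Fin n ⊕ Fin n) →₀ ℕ := ∑ j : Fin n, Finsupp.single (Sum.inr j) 1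

@[simp] lemma oneV_inl (i : Fin n) : oneV n (Sum.inl i) = 1 := by
  simp [oneV, Finsupp.finset_sum_apply, Finsupp.single_apply, Sum.inl.injEq]

@[simp] lemma oneV_inr (j : Fin n) : oneV n (Sum.inr j) = 0 := by
  simp [oneV, Finsupp.finset_sum_apply, Finsupp.single_apply]

@[simp] lemma oneW_inl (i : Fin n) : oneW n (Sum.inl i) = 0 := by
  simp [oneW, Finsupp.finset_sum_apply, Finsupp.single_apply]

@[simp] lemma oneW_inr (j : Fin n) : oneW n (Sum.inr j) = 1 := by
  simp [oneW, Finsupp.finset_sum_apply, Finsupp.single_apply, Sum.inr.injEq]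

lemma prod_monomial {ι : Type} [DecidableEq ι] (s : Finset ι)
    (u : ι → ((Fin n ⊕ Fin n) →₀ ℕ)) :
    (∏ k ∈ s, MvPolynomial.monomial (u k) (1 : ℂ)) =
      MvPolynomial.monomial (∑ k ∈ s, u k) 1 := by
  induction s using Finset.induction_on with
  | empty => simp
  | insert a s h ih => simp [Finset.prod_insert h, Finset.sum_insert h, ih,
      MvPolynomial.monomial_mul]

lemma prodV : (∏ i : Fin n, MvPolynomial.X (Sum.inl i) : MvPolynomial (Fin n ⊕ Fin n) ℂ) =
    MvPolynomial.monomial (oneV n) 1 := by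
  rw [oneV, ← prod_monomial]
  exact Finset.prod_congr rfl fun i _ => (MvPolynomial.X_pow_eq_monomial ..).symm.trans (pow_one _)

lemma prodW : (∏ j : Fin n, MvPolynomial.X (Sum.inr j) : MvPolynomial (Fin n ⊕ Fin n) ℂ) =
    MvPolynomial.monomial (oneW n) 1 := by
  rw [oneW, ← prod_monomial]
  exact Finset.prod_congr rfl fun j _ => (MvPolynomial.X_pow_eq_monomial ..).symm.trans (pow_one _)

/-- fine degree of a monomial exponent -/
def W (d : (Fin n ⊕ Fin n) →₀ ℕ) : (Fin n × Fin n → ℤ) × ℤ :=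
  ∑ k ∈ d.support, d k • (vertexStar n k, 1)

lemma vertexStar_apply (k : Fin n ⊕ Fin n) (i j : Fin n) :
    vertexStar n k (i, j) =
      (if k = Sum.inl i then 1 else 0) + (if k = Sum.inr j then 1 else 0) := by
  cases k <;> simp [vertexStar, Sum.inl.injEq, Sum.inr.injEq, eq_comm]

lemma W_fst_apply (d : (Fin n ⊕ Fin n) →₀ ℕ) (i j : Fin n) :
    (W n d).1 (i, j) = d (Sum.inl i) + d (Sum.inr j) := by
  have h2 : (W n d).1 (i, j) = ∑ k ∈ d.support, (d k : ℤ) * vertexStar n k (i, j) := by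
    rw [W, Prod.fst_sum, Finset.sum_apply]
    simp
  rw [h2]
  have : ∀ k ∈ d.support, (d k : ℤ) * vertexStar n k (i, j) =
      (if k = Sum.inl i then (d k : ℤ) else 0) + (if k = Sum.inr j then (d k : ℤ) else 0) := by
    intro k _
    rw [vertexStar_apply]
    split_ifs <;> ring
  rw [Finset.sum_congr rfl this, Finset.sum_add_distrib,
    Finset.sum_ite_eq' d.support (Sum.inl i) (fun k => (d k : ℤ)),
    Finset.sum_ite_eq' d.support (Sum.inr j) (fun k => (d k : ℤ))]
  by_cases h1 : Sum.inl i ∈ d.support <;> by_cases h2 : Sum.inr j ∈ d.support <;>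
    simp_all [Finsupp.notMem_support_iff]

/-- uniqueness of the exponent in its fine-degree class -/
lemma W_inj (hn : 0 < n) (a d : (Fin n ⊕ Fin n) →₀ ℕ)
    (hinr : ∀ j, a (Sum.inr j) = 0) (i0 : Fin n) (h0 : a (Sum.inl i0) = 0)
    (h : W n d = W n a) : d = a := by
  have key : ∀ i j : Fin n, (d (Sum.inl i) : ℤ) + d (Sum.inr j)
      = a (Sum.inl i) + a (Sum.inr j) := by
    intro i j
    rw [← W_fst_apply, ← W_fst_apply, h]
  have hdr : ∀ j, d (Sum.inr j) = 0 := by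
    intro j
    have := key i0 j
    rw [h0, hinr j] at this
    omega
  have hdl : ∀ i, d (Sum.inl i) = a (Sum.inl i) := by
    intro i
    have := key i ⟨0, hn⟩
    rw [hdr, hinr] at this
    omega
  ext k
  cases k with
  | inl i => exact hdl i
  | inr j => rw [hdr j, hinr j]

/-- the monoid-algebra map defining the toric ideal -/
noncomputable def phi : MvPolynomial (Fin n ⊕ Fin n) ℂ →ₐ[ℂ]
    AddMonoidAlgebra ℂ ((Fin n × Fin n → ℤ) × ℤ) :=
  MvPolynomial.aeval (fun k => AddMonoidAlgebra.single
    ((vertexStar n k, 1) : (Fin n × Fin n → ℤ) × ℤ) (1 : ℂ))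

lemma mem_toricIdeal_iff (g : MvPolynomial (Fin n ⊕ Fin n) ℂ) :
    g ∈ toricIdeal (vertexStar n) ↔ phi n g = 0 :=
  RingHom.mem_ker

lemma phi_monomial (d : (Fin n ⊕ Fin n) →₀ ℕ) (c : ℂ) :
    phi n (MvPolynomial.monomial d c) = AddMonoidAlgebra.single (W n d) c := by
  rw [phi, MvPolynomial.aeval_monomial]
  have : (d.prod fun k e => AddMonoidAlgebra.single
      ((vertexStar n k, 1) : (Fin n × Fin n → ℤ) × ℤ) (1 : ℂ) ^ e) =
      AddMonoidAlgebra.single (W n d) 1 := by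
    rw [Finsupp.prod, W]
    rw [Finset.prod_congr rfl fun k (_ : k ∈ d.support) => by
      rw [AddMonoidAlgebra.single_pow, one_pow]]
    rw [AddMonoidAlgebra.prod_single, Finset.prod_const_one]
  rw [this, AddMonoidAlgebra.coe_algebraMap, Function.comp_apply,
    AddMonoidAlgebra.single_mul_single, zero_add, mul_one]
  rfl

lemma coeff_eq_zero_of_phi (g : MvPolynomial (Fin n ⊕ Fin n) ℂ)
    (hg : phi n g = 0) (a : (Fin n ⊕ Fin n) →₀ ℕ)
    (huniq : ∀ d, W n d = W n a → d = a) : MvPolynomial.coeff a g = 0 := by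
  have hrep : phi n g = ∑ d ∈ g.support, AddMonoidAlgebra.single (W n d)
      (MvPolynomial.coeff d g) := by
    conv_lhs => rw [g.as_sum, map_sum]
    exact Finset.sum_congr rfl fun d _ => phi_monomial n d _
  have h0 : (0 : ℂ) = ∑ d ∈ g.support,
      (AddMonoidAlgebra.single (W n d) (MvPolynomial.coeff d g)).coeff (W n a) := by
    rw [← Finsupp.finset_sum_apply, ← AddMonoidAlgebra.coeff_sum, ← hrep, hg]; rfl
  have : ∀ d ∈ g.support, (AddMonoidAlgebra.single (W n d)
      (MvPolynomial.coeff d g)).coeff (W n a) =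
      if d = a then MvPolynomial.coeff d g else 0 := by
    intro d _
    rw [AddMonoidAlgebra.coeff_single, Finsupp.single_apply]
    by_cases h : d = a
    · simp [h]
    · rw [if_neg h, if_neg (fun hw => h (huniq d hw))]
  rw [Finset.sum_congr rfl this, Finset.sum_ite_eq' g.support a] at h0
  by_cases ha : a ∈ g.support
  · rw [if_pos ha] at h0; exact h0.symm
  · exact MvPolynomial.notMem_support_iff.mp ha

lemma deg_oneV : ∑ k ∈ (oneV n).support, oneV n k = n := by
  rw [Finset.sum_subset (Finset.subset_univ _)
    (fun k _ hk => Finsupp.notMem_support_iff.mp hk)]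
  rw [Fintype.sum_sum_type]
  simp

lemma W_oneV_eq_oneW : W n (oneV n) = W n (oneW n) := by
  have snd : ∀ d : (Fin n ⊕ Fin n) →₀ ℕ,
      (W n d).2 = ∑ k ∈ d.support, (d k : ℤ) := by
    intro d
    rw [W, Prod.snd_sum]
    simp
  apply Prod.ext
  · funext e
    obtain ⟨i, j⟩ := e
    rw [W_fst_apply, W_fst_apply]
    simp
  · rw [snd, snd]
    rw [Finset.sum_subset (Finset.subset_univ _)
        (fun k _ hk => by rw [Finsupp.notMem_support_iff.mp hk]; rfl),
      Finset.sum_subset (Finset.subset_univ (oneW n).support)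
        (fun k _ hk => by rw [Finsupp.notMem_support_iff.mp hk]; rfl),
      Fintype.sum_sum_type, Fintype.sum_sum_type]
    simp

/-- The binomial is in the toric ideal. -/
lemma binom_mem :
    ((∏ i : Fin n, MvPolynomial.X (Sum.inl i) -
        ∏ j : Fin n, MvPolynomial.X (Sum.inr j) : MvPolynomial (Fin n ⊕ Fin n) ℂ)
      ∈ toricIdeal (vertexStar n)) := by
  rw [mem_toricIdeal_iff, map_sub, prodV, prodW, phi_monomial, phi_monomial,
    W_oneV_eq_oneW, sub_self]

/-- Any low-degree element of the toric ideal has zero coefficient in its fine component. -/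
lemma key_coeff (hn : 2 ≤ n) (g : MvPolynomial (Fin n ⊕ Fin n) ℂ)
    (hg : g ∈ toricIdeal (vertexStar n)) (hdeg : g.totalDegree ≤ n - 1)
    (c a : (Fin n ⊕ Fin n) →₀ ℕ) (hca : c + a = oneV n) :
    MvPolynomial.coeff a g = 0 := by
  rw [mem_toricIdeal_iff] at hg
  by_cases hc : c = 0
  · subst hc
    rw [zero_add] at hca
    subst hca
    refine MvPolynomial.coeff_eq_zero_of_totalDegree_lt ?_
    rw [deg_oneV]
    omega
  · have hinr : ∀ j, a (Sum.inr j) = 0 := by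
      intro j
      have := DFunLike.congr_fun hca (Sum.inr j)
      rw [Finsupp.add_apply, oneV_inr] at this
      omega
    obtain ⟨k, hk⟩ := Finsupp.ne_iff.mp hc
    rw [Finsupp.coe_zero, Pi.zero_apply] at hk
    cases k with
    | inr j =>
      exact absurd (by
        have := DFunLike.congr_fun hca (Sum.inr j)
        rw [Finsupp.add_apply, oneV_inr] at this
        omega) hk
    | inl i0 =>
      have h0 : a (Sum.inl i0) = 0 := by
        have := DFunLike.congr_fun hca (Sum.inl i0)
        rw [Finsupp.add_apply, oneV_inl] at this
        omega
      exact coeff_eq_zero_of_phi n g hg a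
        (fun d hd => W_inj n (by omega) a d hinr i0 h0 hd)

/-- The obstruction ideal: polynomials all of whose multiples have zero `oneV`-coefficient. -/
noncomputable def K : Ideal (MvPolynomial (Fin n ⊕ Fin n) ℂ) where
  carrier := {p | ∀ q, MvPolynomial.coeff (oneV n) (q * p) = 0}
  add_mem' := fun {p1} {p2} h1 h2 q => by
    rw [mul_add, MvPolynomial.coeff_add, h1 q, h2 q, add_zero]
  zero_mem' := fun q => by rw [mul_zero, MvPolynomial.coeff_zero]
  smul_mem' := fun r p hp q => by
    rw [smul_eq_mul, ← mul_assoc]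
    exact hp (q * r)

lemma oneV_ne_oneW (hn : 2 ≤ n) : oneV n ≠ oneW n := by
  intro h
  have := DFunLike.congr_fun h (Sum.inl ⟨0, by omega⟩)
  rw [oneV_inl, oneW_inl] at this
  exact one_ne_zero this

/-- The binomial is not in the ideal generated by low-degree elements. -/
lemma binom_not_mem (hn : 2 ≤ n) :
    ((∏ i : Fin n, MvPolynomial.X (Sum.inl i) -
        ∏ j : Fin n, MvPolynomial.X (Sum.inr j) : MvPolynomial (Fin n ⊕ Fin n) ℂ)
      ∉ Ideal.span {p : MvPolynomial (Fin n ⊕ Fin n) ℂ |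
          p ∈ toricIdeal (vertexStar n) ∧ p.totalDegree ≤ n - 1}) := by
  intro hmem
  have hKle : Ideal.span {p : MvPolynomial (Fin n ⊕ Fin n) ℂ |
      p ∈ toricIdeal (vertexStar n) ∧ p.totalDegree ≤ n - 1} ≤ K n := by
    rw [Ideal.span_le]
    rintro p ⟨hpI, hpd⟩ q
    rw [MvPolynomial.coeff_mul]
    refine Finset.sum_eq_zero fun x hx => ?_
    rw [Finset.HasAntidiagonal.mem_antidiagonal] at hx
    rw [key_coeff n hn p hpI hpd x.1 x.2 hx, mul_zero]
  have hK := hKle hmem 1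
  rw [one_mul, MvPolynomial.coeff_sub, prodV, prodW,
    MvPolynomial.coeff_monomial, MvPolynomial.coeff_monomial,
    if_pos rfl, if_neg (fun h => oneV_ne_oneW n hn h.symm)] at hK
  norm_num at hK

end MP18

/-- the toric ideal of `P_n` is not generated in degree at most `n−1`:
the degree-`n` binomial `t_{v₁}⋯t_{v_n} − t_{w₁}⋯t_{w_n}` lies in `I(P_n)` but not in
the ideal generated by the elements of `I(P_n)` of degree at most `n−1`; moreover no
`m_{v_i} + m_{w_j}` divides `s = Σ m_{v_i}` in `S(P_n)`. -/
theorem matchingPolytope_toricIdeal_not_generated_in_low_degree (n : ℕ) (hn : 2 ≤ n) :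
    ((∏ i : Fin n, MvPolynomial.X (Sum.inl i) -
        ∏ j : Fin n, MvPolynomial.X (Sum.inr j) : MvPolynomial (Fin n ⊕ Fin n) ℂ)
      ∈ toricIdeal (vertexStar n)) ∧
    ((∏ i : Fin n, MvPolynomial.X (Sum.inl i) -
        ∏ j : Fin n, MvPolynomial.X (Sum.inr j) : MvPolynomial (Fin n ⊕ Fin n) ℂ)
      ∉ Ideal.span {p : MvPolynomial (Fin n ⊕ Fin n) ℂ |
          p ∈ toricIdeal (vertexStar n) ∧ p.totalDegree ≤ n - 1}) ∧
    (toricIdeal (vertexStar n)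
      ≠ Ideal.span {p : MvPolynomial (Fin n ⊕ Fin n) ℂ |
          p ∈ toricIdeal (vertexStar n) ∧ p.totalDegree ≤ n - 1}) ∧
    ∀ i j : Fin n,
      ¬ ((fun e => (((∑ l : Fin n, vertexStar n (Sum.inl l) e)
            - vertexStar n (Sum.inl i) e - vertexStar n (Sum.inr j) e : ℤ) : ℝ))
          ∈ ((n : ℝ) - 2) • matchingPolytope n) := by
  refine ⟨MP18.binom_mem n, MP18.binom_not_mem n hn, ?_, ?_⟩
  · intro h
    exact MP18.binom_not_mem n hn (h ▸ MP18.binom_mem n)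
  · intro i j hmem
    obtain ⟨x, hx, hfx⟩ := hmem
    have hval := congr_fun hfx (i, j)
    have h1 : (∑ l : Fin n, vertexStar n (Sum.inl l) (i, j)) = 1 := by
      simp [vertexStar]
    have h2 : vertexStar n (Sum.inl i) (i, j) = 1 := by simp [vertexStar]
    have h3 : vertexStar n (Sum.inr j) (i, j) = 1 := by simp [vertexStar]
    have hval' : ((n : ℝ) - 2) * x (i, j) = -1 := by
      simp only [Pi.smul_apply, smul_eq_mul] at hval
      rw [hval, h1, h2, h3]
      norm_num
    have hge : (0 : ℝ) ≤ ((n : ℝ) - 2) * x (i, j) := by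
      have hx0 := hx.1 (i, j)
      have h2n : (0 : ℝ) ≤ (n : ℝ) - 2 := by
        have : (2 : ℝ) ≤ (n : ℝ) := by exact_mod_cast hn
        linarith
      positivity
    linarith
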